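/- Define g : ℕ → ℝ by g(2m) = (−1)^m/(2^m · m!) and g(2m+1) = 0 for m ∈ ℕ (the Taylor coefficients at 0 of e^{−x²/2}), and define z(n) = Σ_{k=0}^{n} g(k) · n!/(n−k)!. Then for every n ∈ ℕ: z(n+1) − z(n) + Σ_{k=0}^{n} Σ_{j=0}^{k−1} (−1)^{k−1−j} · (n! / (j! · (k−1−j)! · (n−k)!)) · z(j) = 0. -/

import Mathlib

open Finset

lemma alt_fact_sum (m : ℕ) :
    ∑ t ∈ Finset.range (m+1), (-1:ℝ)^t / ((t.factorial : ℝ) * ((m-t).factorial : ℝ))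
      = if m = 0 then 1 else 0 := by
  have h1 : ∀ t ∈ Finset.range (m+1),
      (-1:ℝ)^t / ((t.factorial : ℝ) * ((m-t).factorial : ℝ))
        = ((-1:ℝ)^t * (m.choose t : ℝ)) / (m.factorial : ℝ) := by
    intro t ht
    rw [Finset.mem_range] at ht
    rw [Nat.cast_choose ℝ (by omega : t ≤ m)]
    have h2 : ((t.factorial : ℝ) * ((m-t).factorial : ℝ)) ≠ 0 := by positivity
    have h3 : (m.factorial : ℝ) ≠ 0 := by positivity
    field_simp
  rw [Finset.sum_congr rfl h1, ← Finset.sum_div]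
  have h3 := @Int.alternating_sum_range_choose m
  have h4 : ((∑ i ∈ Finset.range (m+1), (-1:ℤ)^i * (m.choose i) : ℤ) : ℝ)
      = ∑ i ∈ Finset.range (m+1), (-1:ℝ)^i * (m.choose i) := by push_cast; ring
  rw [h3] at h4
  rw [← h4]
  split_ifs with h <;> simp [h, Nat.factorial_ne_zero]

lemma gauss_inner_sum (n k i : ℕ) (hik : i < k) :
    ∑ j ∈ Finset.Ico i k, (-1:ℝ)^(k-1-j) *
        ((n.factorial : ℝ) /
          ((j.factorial : ℝ) * ((k-1-j).factorial : ℝ) * ((n-k).factorial : ℝ))) *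
        (Nat.descFactorial j i : ℝ)
      = if i = k - 1 then (n.factorial : ℝ) / ((n-k).factorial : ℝ) else 0 := by
  rw [Finset.sum_Ico_eq_sum_range]
  have hki : k - i = (k - 1 - i) + 1 := by omega
  set m := k - 1 - i with hm
  rw [hki]
  have hstep : ∀ t ∈ Finset.range (m+1),
      (-1:ℝ)^(k-1-(i+t)) *
        ((n.factorial : ℝ) /
          (((i+t).factorial : ℝ) * ((k-1-(i+t)).factorial : ℝ) * ((n-k).factorial : ℝ))) *
        (Nat.descFactorial (i+t) i : ℝ)
      = ((n.factorial : ℝ) / ((n-k).factorial : ℝ)) *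
          ((-1:ℝ)^(m-t) / (((m-t).factorial : ℝ) * ((t).factorial : ℝ))) := by
    intro t ht
    rw [Finset.mem_range] at ht
    have h1 : k - 1 - (i+t) = m - t := by omega
    have h2 : (t.factorial) * (Nat.descFactorial (i+t) i) = (i+t).factorial := by
      have := Nat.factorial_mul_descFactorial (show i ≤ i + t by omega)
      simpa [Nat.add_sub_cancel_left] using this
    have h3 : ((i+t).factorial : ℝ) ≠ 0 := by positivity
    have h4 : ((m-t).factorial : ℝ) ≠ 0 := by positivity
    have h5 : ((n-k).factorial : ℝ) ≠ 0 := by positivity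
    have h6 : ((t).factorial : ℝ) ≠ 0 := by positivity
    have h2' : (t.factorial : ℝ) * (Nat.descFactorial (i+t) i : ℝ) = ((i+t).factorial : ℝ) := by
      exact_mod_cast congrArg (Nat.cast : ℕ → ℝ) h2
    have hD : ((Nat.descFactorial (i+t) i : ℕ) : ℝ) = ((i+t).factorial : ℝ) / (t.factorial : ℝ) := by
      rw [eq_div_iff h6]; linarith [h2']
    rw [h1, hD]
    field_simp
  rw [Finset.sum_congr rfl hstep, ← Finset.mul_sum]
  have hrefl : ∑ t ∈ Finset.range (m+1),
      ((-1:ℝ)^(m-t) / (((m-t).factorial : ℝ) * ((t).factorial : ℝ)))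
      = ∑ t ∈ Finset.range (m+1), (-1:ℝ)^t / ((t.factorial : ℝ) * ((m-t).factorial : ℝ)) := by
    rw [← Finset.sum_range_reflect]
    apply Finset.sum_congr rfl
    intro t ht
    rw [Finset.mem_range] at ht
    have : m - (m - t) = t := by omega
    simp [Nat.add_sub_cancel, this]
  rw [hrefl, alt_fact_sum]
  have hiff : (i = k - 1) ↔ (m = 0) := by omega
  split_ifs with h1 h2 h2 <;> simp_all

/-- The difference equation for the Gaussian function: the interpolating transform of
the Taylor coefficients of exp(−x²/2) is an exact solution of the nonlocal recurrence
representing y' = −x·y on the integer lattice. -/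
theorem discrete_gaussian (g : ℕ → ℝ)
    (hgeven : ∀ m : ℕ, g (2 * m) = (-1 : ℝ) ^ m / ((2 : ℝ) ^ m * (Nat.factorial m : ℝ)))
    (hgodd : ∀ m : ℕ, g (2 * m + 1) = 0)
    (z : ℕ → ℝ)
    (hz : ∀ n : ℕ, z n = ∑ k ∈ Finset.range (n + 1), g k * (Nat.descFactorial n k : ℝ)) :
    ∀ n : ℕ,
      z (n + 1) - z n +
        ∑ k ∈ Finset.range (n + 1), ∑ j ∈ Finset.range k,
          (-1 : ℝ) ^ (k - 1 - j) *
            ((Nat.factorial n : ℝ) /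
              ((Nat.factorial j : ℝ) * (Nat.factorial (k - 1 - j) : ℝ) *
                (Nat.factorial (n - k) : ℝ))) * z j = 0 := by
  have hg1 : g 1 = 0 := by simpa using hgodd 0
  have hrec : ∀ i : ℕ, ((i : ℝ) + 2) * g (i + 2) = - g i := by
    intro i
    rcases Nat.even_or_odd i with ⟨m, hm⟩ | ⟨m, hm⟩
    · subst hm
      have e1 : m + m + 2 = 2 * (m + 1) := by ring
      have e2 : m + m = 2 * m := by ring
      rw [e1, e2, hgeven, hgeven]
      have h3 : ((m.factorial : ℝ)) ≠ 0 := by positivity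
      have h4 : ((2:ℝ) ^ m) ≠ 0 := by positivity
      push_cast [Nat.factorial_succ, pow_succ]
      field_simp
    · subst hm
      have e1 : 2 * m + 1 + 2 = 2 * (m + 1) + 1 := by ring
      rw [e1, hgodd, hgodd]
      simp
  intro n
  have hzn2 : z n = ∑ k ∈ Finset.range (n + 2), g k * (Nat.descFactorial n k : ℝ) := by
    rw [hz n]
    conv_rhs => rw [Finset.sum_range_succ]
    have h0 : n.descFactorial (n + 1) = 0 := by simp [Nat.descFactorial_succ]
    simp [h0]
  have key1a : z (n + 1) - z n =
      ∑ k ∈ Finset.range (n + 2),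
        g k * ((Nat.descFactorial (n + 1) k : ℝ) - (Nat.descFactorial n k : ℝ)) := by
    rw [hz (n + 1), hzn2, ← Finset.sum_sub_distrib]
    apply Finset.sum_congr rfl
    intro k _
    ring
  have key1b : z (n + 1) - z n =
      ∑ j ∈ Finset.range (n + 1), ((j : ℝ) + 1) * g (j + 1) * (Nat.descFactorial n j : ℝ) := by
    rw [key1a, Finset.sum_range_succ']
    have h0 : g 0 * ((Nat.descFactorial (n + 1) 0 : ℝ) - (Nat.descFactorial n 0 : ℝ)) = 0 := by
      simp
    rw [h0, add_zero]
    apply Finset.sum_congr rfl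
    intro j hj
    rw [Finset.mem_range] at hj
    rw [Nat.succ_descFactorial_succ, Nat.descFactorial_succ]
    have hc : ((n - j : ℕ) : ℝ) = (n : ℝ) - j := by
      rw [Nat.cast_sub (by omega)]
    push_cast [hc]
    ring
  have key1 : z (n + 1) - z n =
      ∑ i ∈ Finset.range n, (- g i) * (Nat.descFactorial n (i + 1) : ℝ) := by
    rw [key1b, Finset.sum_range_succ']
    simp only [Nat.zero_add, hg1, Nat.cast_zero, zero_add, mul_zero, zero_mul, add_zero]
    apply Finset.sum_congr rfl
    intro i hi
    have h := hrec i
    push_cast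
    linear_combination (Nat.descFactorial n (i + 1) : ℝ) * h
  have Tk : ∀ k : ℕ, 1 ≤ k → k ≤ n →
      (∑ j ∈ Finset.range k,
        (-1 : ℝ) ^ (k - 1 - j) *
          ((Nat.factorial n : ℝ) /
            ((Nat.factorial j : ℝ) * (Nat.factorial (k - 1 - j) : ℝ) *
              (Nat.factorial (n - k) : ℝ))) * z j)
      = g (k - 1) * ((Nat.factorial n : ℝ) / (Nat.factorial (n - k) : ℝ)) := by
    intro k hk1 hkn
    have step1 : (∑ j ∈ Finset.range k,
        (-1 : ℝ) ^ (k - 1 - j) *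
          ((Nat.factorial n : ℝ) /
            ((Nat.factorial j : ℝ) * (Nat.factorial (k - 1 - j) : ℝ) *
              (Nat.factorial (n - k) : ℝ))) * z j)
        = ∑ j ∈ Finset.range k, ∑ i' ∈ Finset.range (j + 1),
            (-1 : ℝ) ^ (k - 1 - j) *
              ((Nat.factorial n : ℝ) /
                ((Nat.factorial j : ℝ) * (Nat.factorial (k - 1 - j) : ℝ) *
                  (Nat.factorial (n - k) : ℝ))) * (g i' * (Nat.descFactorial j i' : ℝ)) := by
      apply Finset.sum_congr rfl
      intro j _
      rw [hz j, Finset.mul_sum]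
    rw [step1]
    simp only [Finset.range_eq_Ico]
    rw [← Finset.sum_Ico_Ico_comm 0 k (fun i' j =>
      (-1 : ℝ) ^ (k - 1 - j) *
        ((Nat.factorial n : ℝ) /
          ((Nat.factorial j : ℝ) * (Nat.factorial (k - 1 - j) : ℝ) *
            (Nat.factorial (n - k) : ℝ))) * (g i' * (Nat.descFactorial j i' : ℝ)))]
    have step2 : ∀ i' ∈ Finset.Ico 0 k,
        (∑ j ∈ Finset.Ico i' k,
          (-1 : ℝ) ^ (k - 1 - j) *
            ((Nat.factorial n : ℝ) /
              ((Nat.factorial j : ℝ) * (Nat.factorial (k - 1 - j) : ℝ) *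
                (Nat.factorial (n - k) : ℝ))) * (g i' * (Nat.descFactorial j i' : ℝ)))
        = if i' = k - 1 then g i' * ((Nat.factorial n : ℝ) / (Nat.factorial (n - k) : ℝ))
          else 0 := by
      intro i' hi'
      rw [Finset.mem_Ico] at hi'
      have hik : i' < k := hi'.2
      have hpull : (∑ j ∈ Finset.Ico i' k,
          (-1 : ℝ) ^ (k - 1 - j) *
            ((Nat.factorial n : ℝ) /
              ((Nat.factorial j : ℝ) * (Nat.factorial (k - 1 - j) : ℝ) *
                (Nat.factorial (n - k) : ℝ))) * (g i' * (Nat.descFactorial j i' : ℝ)))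
          = g i' * ∑ j ∈ Finset.Ico i' k,
            (-1 : ℝ) ^ (k - 1 - j) *
              ((Nat.factorial n : ℝ) /
                ((Nat.factorial j : ℝ) * (Nat.factorial (k - 1 - j) : ℝ) *
                  (Nat.factorial (n - k) : ℝ))) * (Nat.descFactorial j i' : ℝ) := by
        rw [Finset.mul_sum]
        apply Finset.sum_congr rfl
        intro j _
        ring
      rw [hpull, gauss_inner_sum n k i' hik]
      split_ifs <;> simp
    rw [Finset.sum_congr rfl step2]
    rw [Finset.sum_ite_eq' (Finset.Ico 0 k) (k - 1)
      (fun i' => g i' * ((Nat.factorial n : ℝ) / (Nat.factorial (n - k) : ℝ)))]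
    have hmem : k - 1 ∈ Finset.Ico 0 k := by
      rw [Finset.mem_Ico]
      omega
    rw [if_pos hmem]
  have key2 : (∑ k ∈ Finset.range (n + 1), ∑ j ∈ Finset.range k,
        (-1 : ℝ) ^ (k - 1 - j) *
          ((Nat.factorial n : ℝ) /
            ((Nat.factorial j : ℝ) * (Nat.factorial (k - 1 - j) : ℝ) *
              (Nat.factorial (n - k) : ℝ))) * z j)
      = ∑ i ∈ Finset.range n, g i * (Nat.descFactorial n (i + 1) : ℝ) := by
    rw [Finset.sum_range_succ']
    rw [Finset.sum_range_zero, add_zero]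
    apply Finset.sum_congr rfl
    intro i hi
    rw [Finset.mem_range] at hi
    rw [Tk (i + 1) (by omega) (by omega)]
    have h1 : i + 1 - 1 = i := by omega
    rw [h1]
    have h5 : ((Nat.factorial (n - (i + 1)) : ℕ) : ℝ) ≠ 0 := by positivity
    have hD := Nat.factorial_mul_descFactorial (show i + 1 ≤ n by omega)
    congr 1
    rw [eq_comm, eq_div_iff h5]
    rw [← hD]
    push_cast
    ring
  rw [key1, key2, ← Finset.sum_add_distrib]
  apply Finset.sum_eq_zero
  intro i _
  ring
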